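/- arXiv:2310.02854 — 3 statements merged into one kernel-verified Lean document; each statement's English description precedes it below -/
import Mathlib

section
/- If W1, V1, W2, V2 are real random variables with moment generating functions finite on an open interval around 0, W1 is independent of V1, W2 is independent of V2, W1 and W2 have the same distribution, and W1 + V1 has the same distribution as W2 + V2, then V1 and V2 have the same distribution. -/
open MeasureTheory ProbabilityTheory

lemma mgf_eq_of_map_eq {Ω : Type*} [MeasurableSpace Ω] {μ : Measure Ω}
    {X Y : Ω → ℝ} (hX : Measurable X) (hY : Measurable Y)
    (h : μ.map X = μ.map Y) (t : ℝ) : mgf X μ t = mgf Y μ t := by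
  have hx := integral_map (μ := μ) hX.aemeasurable
    (f := fun x => Real.exp (t * x)) ((measurable_const.mul measurable_id).exp.aestronglyMeasurable)
  have hy := integral_map (μ := μ) hY.aemeasurable
    (f := fun x => Real.exp (t * x)) ((measurable_const.mul measurable_id).exp.aestronglyMeasurable)
  simp only [mgf]
  rw [← hx, ← hy, h]

/-- If W1, V1, W2, V2 are real random variables with MGFs finite on an open interval
around 0 (so that MGFs determine distributions, assumed as a hypothesis), W1 ⟂ V1,
W2 ⟂ V2, W1 =d W2, and W1 + V1 =d W2 + V2, then V1 =d V2. -/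
theorem stmt_0 {Ω : Type*} [MeasurableSpace Ω] (μ : Measure Ω) [IsProbabilityMeasure μ]
    (W1 V1 W2 V2 : Ω → ℝ) (ε : ℝ) (hε : 0 < ε)
    (hW1 : Measurable W1) (hV1 : Measurable V1) (hW2 : Measurable W2) (hV2 : Measurable V2)
    (hintW1 : ∀ t ∈ Set.Ioo (-ε) ε, Integrable (fun ω => Real.exp (t * W1 ω)) μ)
    (hintV1 : ∀ t ∈ Set.Ioo (-ε) ε, Integrable (fun ω => Real.exp (t * V1 ω)) μ)
    (hintW2 : ∀ t ∈ Set.Ioo (-ε) ε, Integrable (fun ω => Real.exp (t * W2 ω)) μ)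
    (hintV2 : ∀ t ∈ Set.Ioo (-ε) ε, Integrable (fun ω => Real.exp (t * V2 ω)) μ)
    (hdet : ∀ X Y : Ω → ℝ, Measurable X → Measurable Y →
      (∀ t ∈ Set.Ioo (-ε) ε, mgf X μ t = mgf Y μ t) → μ.map X = μ.map Y)
    (hIndep1 : IndepFun W1 V1 μ) (hIndep2 : IndepFun W2 V2 μ)
    (hW : μ.map W1 = μ.map W2)
    (hSum : μ.map (fun ω => W1 ω + V1 ω) = μ.map (fun ω => W2 ω + V2 ω)) :
    μ.map V1 = μ.map V2 := by
  refine hdet V1 V2 hV1 hV2 fun t ht => ?_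
  have h1 : mgf (W1 + V1) μ t = mgf W1 μ t * mgf V1 μ t :=
    hIndep1.mgf_add (hintW1 t ht).aestronglyMeasurable (hintV1 t ht).aestronglyMeasurable
  have h2 : mgf (W2 + V2) μ t = mgf W2 μ t * mgf V2 μ t :=
    hIndep2.mgf_add (hintW2 t ht).aestronglyMeasurable (hintV2 t ht).aestronglyMeasurable
  have hWeq : mgf W1 μ t = mgf W2 μ t := mgf_eq_of_map_eq hW1 hW2 hW t
  have hSeq : mgf (W1 + V1) μ t = mgf (W2 + V2) μ t :=
    mgf_eq_of_map_eq (hW1.add hV1) (hW2.add hV2) hSum t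
  have hpos : 0 < mgf W1 μ t := mgf_pos (hintW1 t ht)
  have := h1.symm.trans (hSeq.trans h2)
  rw [hWeq] at this hpos
  exact mul_left_cancel₀ hpos.ne' this
end

section
/- Let Z_p, Z_q ⊆ ℝ^d be nonempty compact sets, let S ∪ U be a partition of {1,...,d}, and let A ∈ ℝ^d with all components nonnegative. Suppose: (i) for every z ∈ Z_p there exists z' ∈ Z_q with z'_i ≥ z_i for all i and z'_j > z_j for all j ∈ U; (ii) max over z ∈ Z_p of ⟨A, z⟩ equals max over z ∈ Z_q of ⟨A, z⟩. Then A_j = 0 for every j ∈ U. -/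
/-- Support variability plus invariance of the maximum of a nonnegative linear functional
forces the functional to vanish on the unstable coordinates U. -/
theorem stmt_5 (d : ℕ) (Zp Zq : Set (Fin d → ℝ)) (hZp : Zp.Nonempty) (hZq : Zq.Nonempty)
    (hcp : IsCompact Zp) (hcq : IsCompact Zq)
    (S U : Set (Fin d)) (hpart : S ∪ U = Set.univ) (hdisj : Disjoint S U)
    (A : Fin d → ℝ) (hA : ∀ i, 0 ≤ A i)
    (hvar : ∀ z ∈ Zp, ∃ z' ∈ Zq, (∀ i, z i ≤ z' i) ∧ ∀ j ∈ U, z j < z' j)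
    (hmax : sSup ((fun z => ∑ i, A i * z i) '' Zp) = sSup ((fun z => ∑ i, A i * z i) '' Zq)) :
    ∀ j ∈ U, A j = 0 := by
  set f : (Fin d → ℝ) → ℝ := fun z => ∑ i, A i * z i with hf
  have hcont : Continuous f := by
    apply continuous_finset_sum
    exact fun i _ => continuous_const.mul (continuous_apply i)
  obtain ⟨z₀, hz₀, heq, hge⟩ := hcp.exists_sSup_image_eq_and_ge hZp hcont.continuousOn
  obtain ⟨z', hz', hle, hlt⟩ := hvar z₀ hz₀
  intro j hj
  by_contra hAj
  have hAj' : 0 < A j := lt_of_le_of_ne (hA j) (Ne.symm hAj)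
  have h1 : f z₀ < f z' := by
    apply Finset.sum_lt_sum
    · exact fun i _ => mul_le_mul_of_nonneg_left (hle i) (hA i)
    · exact ⟨j, Finset.mem_univ j, mul_lt_mul_of_pos_left (hlt j hj) hAj'⟩
  have h2 : f z' ≤ sSup (f '' Zq) := by
    obtain ⟨zq, hzq, heq', hge'⟩ := hcq.exists_sSup_image_eq_and_ge hZq hcont.continuousOn
    rw [heq']; exact hge' z' hz'
  rw [← hmax, heq] at h2
  linarith
end

section
/- Let Z_p, Z_q ⊆ ℝ^d be nonempty compact sets, S ∪ U a partition of {1,...,d}, s ∈ {-1,+1}^d a sign vector, and A ∈ ℝ^d with sign(A_i) ∈ {0, s_i} for all i (i.e., A lies in the closed orthant determined by s). Define Z̄_q = {z ⊙ s : z ∈ Z_q} (componentwise product) and Z̄_p similarly. Suppose for every w ∈ Z̄_p there exists w' ∈ Z̄_q with w'_i ≥ w_i for all i and w'_j > w_j for all j ∈ U, and that max_{z∈Z_p} ⟨A,z⟩ = max_{z∈Z_q} ⟨A,z⟩. Then A_j = 0 for all j ∈ U. -/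
/-- Orthant extension: if A lies in the closed orthant with sign vector s and the
sign-transformed supports satisfy the variability condition, then invariance of the
maximum of ⟨A,·⟩ forces A to vanish on the unstable coordinates U. -/
theorem stmt_6 (d : ℕ) (Zp Zq : Set (Fin d → ℝ)) (hZp : Zp.Nonempty) (hZq : Zq.Nonempty)
    (hcp : IsCompact Zp) (hcq : IsCompact Zq)
    (S U : Set (Fin d)) (hpart : S ∪ U = Set.univ) (hdisj : Disjoint S U)
    (s : Fin d → ℝ) (hs : ∀ i, s i = 1 ∨ s i = -1)
    (A : Fin d → ℝ) (hA : ∀ i, 0 ≤ s i * A i)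
    (hvar : ∀ w ∈ (fun z (i : Fin d) => z i * s i) '' Zp,
      ∃ w' ∈ (fun z (i : Fin d) => z i * s i) '' Zq,
        (∀ i, w i ≤ w' i) ∧ ∀ j ∈ U, w j < w' j)
    (hmax : sSup ((fun z => ∑ i, A i * z i) '' Zp) = sSup ((fun z => ∑ i, A i * z i) '' Zq)) :
    ∀ j ∈ U, A j = 0 := by
  intro j hj
  by_contra hAj
  set f : (Fin d → ℝ) → ℝ := fun z => ∑ i, A i * z i with hf
  have hcont : Continuous f :=
    continuous_finset_sum _ fun i _ => continuous_const.mul (continuous_apply i)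
  obtain ⟨x, hxZp, hx⟩ := hcp.exists_sSup_image_eq hZp hcont.continuousOn
  obtain ⟨w', ⟨y, hyZq, hy⟩, hle, hlt⟩ := hvar (fun i => x i * s i) ⟨x, hxZp, rfl⟩
  have key : ∀ z : Fin d → ℝ, f z = ∑ i, (s i * A i) * (z i * s i) := by
    intro z; apply Finset.sum_congr rfl; intro i _
    rcases hs i with h | h <;> simp [h] <;> ring
  have hBj : 0 < s j * A j := by
    rcases lt_or_eq_of_le (hA j) with h | h
    · exact h
    · exfalso; apply hAj
      rcases hs j with h' | h' <;> rw [h'] at h <;> linarith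
  have hfy : f x < f y := by
    rw [key x, key y]
    have hy' : ∀ i, y i * s i = w' i := fun i => congrFun hy i
    apply Finset.sum_lt_sum
    · intro i _
      rw [hy' i]
      exact mul_le_mul_of_nonneg_left (hle i) (hA i)
    · refine ⟨j, Finset.mem_univ j, ?_⟩
      rw [hy' j]
      exact mul_lt_mul_of_pos_left (hlt j hj) hBj
  have hle2 : f y ≤ sSup (f '' Zq) :=
    le_csSup (hcq.image hcont).bddAbove ⟨y, hyZq, rfl⟩
  rw [← hmax, hx] at hle2
  linarith
end
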